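/- For every function a : ℕ → ℕ satisfying a(0) = 0, a(1) = 1, and a(k) = a(k − a(k−1)) + a(k − 1 − a(k−2)) for all k ≥ 2, and for every k ∈ ℕ, one has S₂(k) = 2 · a(k). -/

import Mathlib

/-- The Smarandache primitive number `S₂(k)`: the least `n` such that `2^k` divides `n!`. -/
noncomputable def S2 (k : ℕ) : ℕ := sInf {n : ℕ | 2 ^ k ∣ Nat.factorial n}

namespace MetaFibAux

/-- binary digit sum -/
def s2 (n : ℕ) : ℕ := (Nat.digits 2 n).sum

lemma s2_zero : s2 0 = 0 := by simp [s2]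

lemma s2_two_mul (n : ℕ) : s2 (2 * n) = s2 n := by
  rcases Nat.eq_zero_or_pos n with h | h
  · simp [h]
  · unfold s2
    rw [Nat.digits_def' (by norm_num) (by omega)]
    simp [Nat.mul_div_cancel_left _ (by norm_num : (0:ℕ) < 2), Nat.mul_mod_right]

lemma s2_odd (n : ℕ) : s2 (2 * n + 1) = s2 n + 1 := by
  unfold s2
  rw [Nat.digits_def' (by norm_num) (by omega)]
  have h1 : (2 * n + 1) % 2 = 1 := by omega
  have h2 : (2 * n + 1) / 2 = n := by omega
  rw [h1, h2]
  simp [Nat.add_comm]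

lemma s2_one : s2 1 = 1 := by
  have := s2_odd 0
  simpa [s2_zero] using this

lemma s2_le (n : ℕ) : s2 n ≤ n := by
  induction n using Nat.strong_induction_on with
  | _ n ih =>
    rcases Nat.eq_zero_or_pos n with h | h
    · simp [h, s2_zero]
    · rcases Nat.even_or_odd n with ⟨t, ht⟩ | ⟨t, ht⟩
      · have ht' : n = 2 * t := by omega
        have := ih t (by omega)
        rw [ht', s2_two_mul]; omega
      · have := ih t (by omega)
        rw [ht, s2_odd]; omega

lemma s2_succ_le (n : ℕ) : s2 (n + 1) ≤ s2 n + 1 := by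
  induction n using Nat.strong_induction_on with
  | _ n ih =>
    rcases Nat.even_or_odd (n + 1) with ⟨t, ht⟩ | ⟨t, ht⟩
    · -- n + 1 = 2 t, t ≥ 1, n = 2(t-1)+1
      have ht1 : 1 ≤ t := by omega
      have h1 : n + 1 = 2 * t := by omega
      have h2 : n = 2 * (t - 1) + 1 := by omega
      have hIH : s2 ((t - 1) + 1) ≤ s2 (t - 1) + 1 := ih (t - 1) (by omega)
      have h3 : t - 1 + 1 = t := by omega
      rw [h1, s2_two_mul, h2, s2_odd]
      rw [h3] at hIH; omega
    · have h1 : n + 1 = 2 * t + 1 := by omega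
      have h2 : n = 2 * t := by omega
      rw [h1, s2_odd, h2, s2_two_mul]

lemma s2_pow (k : ℕ) : s2 (2 ^ k) = 1 := by
  induction k with
  | zero => simpa using s2_one
  | succ k ih => rw [pow_succ, mul_comm, s2_two_mul]; exact ih

/-- the auxiliary inverse sequence -/
noncomputable def bb (k : ℕ) : ℕ := sInf {m : ℕ | k + s2 m ≤ 2 * m}

lemma bb_set_nonempty (k : ℕ) : {m : ℕ | k + s2 m ≤ 2 * m}.Nonempty := by
  refine ⟨2 ^ k, ?_⟩
  have h1 : k < 2 ^ k := Nat.lt_two_pow_self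
  have h2 : s2 (2 ^ k) = 1 := s2_pow k
  simp only [Set.mem_setOf_eq, h2]
  omega

lemma bb_mem (k : ℕ) : k + s2 (bb k) ≤ 2 * bb k :=
  Nat.sInf_mem (bb_set_nonempty k)

lemma bb_min {k y : ℕ} (h : y < bb k) : 2 * y + 1 ≤ k + s2 y := by
  have := Nat.notMem_of_lt_sInf (s := {m : ℕ | k + s2 m ≤ 2 * m}) h
  simp only [Set.mem_setOf_eq, not_le] at this
  omega

lemma bb_le_self (k : ℕ) : bb k ≤ k := by
  apply Nat.sInf_le
  have := s2_le k
  simp only [Set.mem_setOf_eq]; omega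

lemma bb_mono {k k' : ℕ} (h : k ≤ k') : bb k ≤ bb k' := by
  apply Nat.sInf_le
  have := bb_mem k'
  simp only [Set.mem_setOf_eq]; omega

lemma bb_succ_le (k : ℕ) : bb (k + 1) ≤ bb k + 1 := by
  apply Nat.sInf_le
  have h1 := bb_mem k
  have h2 := s2_succ_le (bb k)
  simp only [Set.mem_setOf_eq]; omega

/-- additive form of monotonicity of `m ↦ 2m - s2 m` -/
lemma f_mono {y c : ℕ} (h : y ≤ c) : 2 * y + s2 c ≤ 2 * c + s2 y := by
  obtain ⟨d, rfl⟩ := Nat.exists_eq_add_of_le h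
  clear h
  induction d with
  | zero => simp
  | succ d ih =>
    have h1 : y + (d + 1) = (y + d) + 1 := by omega
    have h2 := s2_succ_le (y + d)
    rw [h1]; omega

lemma bb_eq {x c : ℕ} (h1 : x + s2 (c + 1) ≤ 2 * (c + 1)) (h2 : 2 * c + 1 ≤ x + s2 c) :
    bb x = c + 1 := by
  refine le_antisymm (Nat.sInf_le (by simpa using h1)) ?_
  by_contra hcon
  push_neg at hcon
  have hle : bb x ≤ c := by omega
  have h3 := f_mono hle
  have h4 := bb_mem x
  omega

lemma bb_zero : bb 0 = 0 := by
  have : bb 0 ≤ 0 := Nat.sInf_le (by simp [s2_zero])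
  omega

lemma bb_one : bb 1 = 1 := by
  have := bb_eq (x := 1) (c := 0) (by simp [s2_one]) (by simp [s2_zero])
  simpa using this

lemma bb_two : bb 2 = 2 := by
  have hs2 : s2 2 = 1 := by
    have := s2_two_mul 1; rw [s2_one] at this; simpa using this
  have := bb_eq (x := 2) (c := 1) (by simp [hs2]) (by simp [s2_one])
  simpa using this

lemma s2_two_mul_sub_one {t : ℕ} (ht : 1 ≤ t) : s2 (2 * t - 1) = s2 (t - 1) + 1 := by
  have h : 2 * t - 1 = 2 * (t - 1) + 1 := by omega
  rw [h, s2_odd]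

lemma s2_two_mul_sub_two {t : ℕ} (ht : 1 ≤ t) : s2 (2 * t - 2) = s2 (t - 1) := by
  have h : 2 * t - 2 = 2 * (t - 1) := by omega
  rw [h, s2_two_mul]

lemma s2_pred_le {t : ℕ} (ht : 1 ≤ t) : s2 t ≤ s2 (t - 1) + 1 := by
  have := s2_succ_le (t - 1)
  have h : t - 1 + 1 = t := by omega
  rwa [h] at this

/-- The key meta-Fibonacci recursion for `bb`. -/
lemma bb_rec {k : ℕ} (hk : 2 ≤ k) :
    bb k = bb (k - bb (k - 1)) + bb (k - 1 - bb (k - 2)) := by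
  set m := bb k with hm
  have hm2 : 2 ≤ m := by
    have := bb_mono hk
    rw [bb_two] at this; omega
  set m1 := bb (k - 1) with hm1
  set m2 := bb (k - 2) with hm2'
  have hm1u : m1 ≤ m := bb_mono (by omega)
  have hm1l : m ≤ m1 + 1 := by
    have := bb_succ_le (k - 1)
    have h : k - 1 + 1 = k := by omega
    rw [h] at this; omega
  have hm2u : m2 ≤ m1 := bb_mono (by omega)
  have hm2l : m1 ≤ m2 + 1 := by
    have := bb_succ_le (k - 2)
    have h : k - 2 + 1 = k - 1 := by omega
    rw [h] at this; omega
  have hm1k : m1 ≤ k - 1 := bb_le_self (k - 1)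
  have hm2k : m2 ≤ k - 2 := bb_le_self (k - 2)
  have hU : k + s2 m ≤ 2 * m := bb_mem k
  have hL : 2 * (m - 1) + 1 ≤ k + s2 (m - 1) := bb_min (by omega)
  have hU1 : (k - 1) + s2 m1 ≤ 2 * m1 := bb_mem (k - 1)
  have hU2 : (k - 2) + s2 m2 ≤ 2 * m2 := bb_mem (k - 2)
  rcases Nat.even_or_odd m with ⟨t, ht⟩ | ⟨t, ht⟩
  · -- m = 2t, t ≥ 1
    have htm : m = 2 * t := by omega
    have ht1 : 1 ≤ t := by omega
    have e1 : s2 m = s2 t := by rw [htm, s2_two_mul]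
    have e2 : s2 (m - 1) = s2 (t - 1) + 1 := by
      rw [htm]; exact s2_two_mul_sub_one ht1
    have e4 : s2 t ≤ s2 (t - 1) + 1 := s2_pred_le ht1
    -- part A : bb (k - m1) = t
    have hA : bb (k - m1) = t := by
      have htt : t - 1 + 1 = t := by omega
      have hcase : m1 = 2 * t - 1 ∨ m1 = 2 * t := by omega
      rcases hcase with hc | hc
      · -- lower bound from hL, upper from hU1
        have e3 : s2 m1 = s2 (t - 1) + 1 := by rw [hc]; exact s2_two_mul_sub_one ht1
        rw [e3] at hU1
        rw [e1] at hU; rw [e2] at hL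
        have := bb_eq (x := k - m1) (c := t - 1)
          (by rw [htt]; omega) (by omega)
        rwa [htt] at this
      · have hL1 : 2 * (m1 - 1) + 1 ≤ (k - 1) + s2 (m1 - 1) := bb_min (by omega)
        have e3 : s2 (m1 - 1) = s2 (t - 1) + 1 := by
          rw [hc]; exact s2_two_mul_sub_one ht1
        rw [e3, hc] at hL1
        rw [e1] at hU
        have := bb_eq (x := k - m1) (c := t - 1)
          (by rw [htt, hc]; omega) (by rw [hc]; omega)
        rwa [htt] at this
    -- part B : bb (k - 1 - m2) = t
    have hB : bb (k - 1 - m2) = t := by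
      have htt : t - 1 + 1 = t := by omega
      have hcase : m2 = 2 * t - 2 ∨ m2 = 2 * t - 1 ∨ m2 = 2 * t := by omega
      rcases hcase with hc | hc | hc
      · have e3 : s2 m2 = s2 (t - 1) := by rw [hc]; exact s2_two_mul_sub_two ht1
        rw [e3] at hU2
        rw [e2] at hL
        have := bb_eq (x := k - 1 - m2) (c := t - 1)
          (by rw [htt, hc]; omega) (by rw [hc]; omega)
        rwa [htt] at this
      · have hL2 : 2 * (m2 - 1) + 1 ≤ (k - 2) + s2 (m2 - 1) := bb_min (by omega)
        have e3 : s2 (m2 - 1) = s2 (t - 1) := by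
          rw [hc]; have h : 2 * t - 1 - 1 = 2 * (t - 1) := by omega
          rw [h, s2_two_mul]
        rw [e3, hc] at hL2
        rw [e1] at hU
        have := bb_eq (x := k - 1 - m2) (c := t - 1)
          (by rw [htt, hc]; omega) (by rw [hc]; omega)
        rwa [htt] at this
      · have hL2 : 2 * (m2 - 1) + 1 ≤ (k - 2) + s2 (m2 - 1) := bb_min (by omega)
        have e3 : s2 (m2 - 1) = s2 (t - 1) + 1 := by
          rw [hc]; exact s2_two_mul_sub_one ht1
        rw [e3, hc] at hL2
        rw [e1] at hU
        have := bb_eq (x := k - 1 - m2) (c := t - 1)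
          (by rw [htt, hc]; omega) (by rw [hc]; omega)
        rwa [htt] at this
    rw [hA, hB]; omega
  · -- m = 2t + 1, t ≥ 1
    have htm : m = 2 * t + 1 := ht
    have ht1 : 1 ≤ t := by omega
    have e1 : s2 m = s2 t + 1 := by rw [htm]; exact s2_odd t
    have e2 : s2 (m - 1) = s2 t := by
      have h : m - 1 = 2 * t := by omega
      rw [h, s2_two_mul]
    have e4 : s2 t ≤ s2 (t - 1) + 1 := s2_pred_le ht1
    have e5 : s2 (t + 1) ≤ s2 t + 1 := s2_succ_le t
    rw [e1] at hU; rw [e2] at hL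
    -- k + s2 t = 4t + 1
    have hkey : k + s2 t = 4 * t + 1 := by omega
    -- m1 = 2t
    have hm1v : m1 = 2 * t := by
      by_contra hne
      have hm1v' : m1 = 2 * t + 1 := by omega
      have hL1 : 2 * (m1 - 1) + 1 ≤ (k - 1) + s2 (m1 - 1) := bb_min (by omega)
      have e6 : s2 (m1 - 1) = s2 t := by
        have h : m1 - 1 = 2 * t := by omega
        rw [h, s2_two_mul]
      rw [e6, hm1v'] at hL1
      omega
    -- m2 = 2t
    have hm2v : m2 = 2 * t := by
      have hge : 2 * t - 1 ≤ m2 := by omega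
      have hne : m2 ≠ 2 * t - 1 := by
        intro hc
        have e6 : s2 m2 = s2 (t - 1) + 1 := by rw [hc]; exact s2_two_mul_sub_one ht1
        rw [e6, hc] at hU2
        omega
      omega
    -- part A : bb (k - m1) = t + 1
    have hA : bb (k - m1) = t + 1 := by
      refine bb_eq (x := k - m1) (c := t) ?_ ?_
      · rw [hm1v] at *; omega
      · rw [hm1v]; omega
    -- part B : bb (k - 1 - m2) = t
    have hB : bb (k - 1 - m2) = t := by
      have htt : t - 1 + 1 = t := by omega
      have := bb_eq (x := k - 1 - m2) (c := t - 1)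
        (by rw [htt, hm2v]; omega) (by rw [hm2v]; omega)
      rwa [htt] at this
    rw [hA, hB]; omega

/-- `S2 k = 2 * bb k`. -/
lemma S2_eq (k : ℕ) : S2 k = 2 * bb k := by
  have hdvd : ∀ n : ℕ, 2 ^ k ∣ Nat.factorial n ↔ k + s2 n ≤ n := by
    intro n
    rw [Nat.Prime.pow_dvd_iff_le_factorization Nat.prime_two (Nat.factorial_ne_zero n)]
    rw [Nat.factorization_def _ Nat.prime_two]
    have hleg := sub_one_mul_padicValNat_factorial (p := 2) (hp := ⟨Nat.prime_two⟩) n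
    have hleg' : padicValNat 2 (Nat.factorial n) = n - s2 n := by
      simpa [s2] using hleg
    rw [hleg']
    have := s2_le n
    omega
  have hset : {n : ℕ | 2 ^ k ∣ Nat.factorial n} = {n : ℕ | k + s2 n ≤ n} := by
    ext n; exact hdvd n
  rw [S2, hset]
  have hmem : 2 * bb k ∈ {n : ℕ | k + s2 n ≤ n} := by
    have h1 := bb_mem k
    simp only [Set.mem_setOf_eq, s2_two_mul]
    omega
  refine le_antisymm (Nat.sInf_le hmem) ?_
  have hne : ({n : ℕ | k + s2 n ≤ n}).Nonempty := ⟨2 * bb k, hmem⟩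
  have hsmem := Nat.sInf_mem hne
  simp only [Set.mem_setOf_eq] at hsmem
  set n := sInf {n : ℕ | k + s2 n ≤ n} with hn
  rcases Nat.even_or_odd n with ⟨j, hj⟩ | ⟨j, hj⟩
  · have hj' : n = 2 * j := by omega
    rw [hj', s2_two_mul] at hsmem
    have : bb k ≤ j := Nat.sInf_le (by simpa using hsmem)
    omega
  · rw [hj, s2_odd] at hsmem
    have : bb k ≤ j := Nat.sInf_le (by simp only [Set.mem_setOf_eq]; omega)
    omega

end MetaFibAux

theorem stmt_0 (a : ℕ → ℕ) (h0 : a 0 = 0) (h1 : a 1 = 1)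
    (hrec : ∀ k, 2 ≤ k → a k = a (k - a (k - 1)) + a (k - 1 - a (k - 2))) :
    ∀ k, S2 k = 2 * a k := by
  have key : ∀ k, a k = MetaFibAux.bb k := by
    intro k
    induction k using Nat.strong_induction_on with
    | _ k ih =>
      match k, ih with
      | 0, _ => rw [h0, MetaFibAux.bb_zero]
      | 1, _ => rw [h1, MetaFibAux.bb_one]
      | (n + 2), ih =>
        have hk2 : 2 ≤ n + 2 := by omega
        rw [hrec (n + 2) hk2, MetaFibAux.bb_rec hk2]
        have e1 : a (n + 2 - 1) = MetaFibAux.bb (n + 2 - 1) := ih _ (by omega)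
        have e2 : a (n + 2 - 2) = MetaFibAux.bb (n + 2 - 2) := ih _ (by omega)
        rw [e1, e2]
        have hb1 : 1 ≤ MetaFibAux.bb (n + 2 - 1) := by
          have := MetaFibAux.bb_mono (show 1 ≤ n + 2 - 1 by omega)
          rw [MetaFibAux.bb_one] at this; omega
        have e3 : a (n + 2 - MetaFibAux.bb (n + 2 - 1))
            = MetaFibAux.bb (n + 2 - MetaFibAux.bb (n + 2 - 1)) := ih _ (by omega)
        have e4 : a (n + 2 - 1 - MetaFibAux.bb (n + 2 - 2))
            = MetaFibAux.bb (n + 2 - 1 - MetaFibAux.bb (n + 2 - 2)) := ih _ (by omega)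
        rw [e3, e4]
  intro k
  rw [key k]
  exact MetaFibAux.S2_eq k
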